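/- For the logistic map with μ ∈ (3, 1+√6), the fixed point p₁ = 1 - 1/μ is a flip (repelling) fixed point: |ℓ_μ'(p₁)| > 1 and ℓ_μ'(p₁) < 0, and the interval J₁ = [1 - p₁, p₁] together with J₂ = [p₁, q₂] (where q₂ is the larger root of ℓ_μ(x) = 1 - p₁) forms a period-2 trapping region: ℓ_μ(J₁) ⊆ J₂ and ℓ_μ(J₂) ⊆ J₁. -/

import Mathlib

/-- The logistic map `ℓ_μ(x) = μ x (1 - x)`. -/
def logistic (μ x : ℝ) : ℝ := μ * x * (1 - x)

/-- For `μ ∈ (3, 1+√6)` the fixed point `p₁ = 1 - 1/μ` of the logistic map is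
flip and repelling (`|ℓ_μ'(p₁)| > 1`, `ℓ_μ'(p₁) < 0`), and the intervals
`J₁ = [1-p₁, p₁]`, `J₂ = [p₁, q₂]` (with `q₂` the larger root of
`ℓ_μ(x) = 1 - p₁`) form a period-2 trapping region:
`ℓ_μ(J₁) ⊆ J₂` and `ℓ_μ(J₂) ⊆ J₁`. -/
theorem flip_fixed_point_trapping (μ : ℝ) (hμ : μ ∈ Set.Ioo 3 (1 + Real.sqrt 6))
    (p₁ : ℝ) (hp₁ : p₁ = 1 - 1 / μ)
    (q₂ : ℝ) (hq₂ : q₂ ∈ Set.Ioc p₁ 1) (hq₂root : logistic μ q₂ = 1 - p₁) :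
    (|deriv (logistic μ) p₁| > 1 ∧ deriv (logistic μ) p₁ < 0) ∧
      Set.MapsTo (logistic μ) (Set.Icc (1 - p₁) p₁) (Set.Icc p₁ q₂) ∧
      Set.MapsTo (logistic μ) (Set.Icc p₁ q₂) (Set.Icc (1 - p₁) p₁) := by
  obtain ⟨hμ3, hμ6⟩ := hμ
  have hμ0 : (0:ℝ) < μ := by linarith
  have hμne : μ ≠ 0 := ne_of_gt hμ0
  -- (μ-1)^2 < 6
  have hs : (μ - 1)^2 < 6 := by
    have h6 : Real.sqrt 6 ^ 2 = 6 := Real.sq_sqrt (by norm_num)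
    nlinarith [Real.sqrt_nonneg 6, hμ6, hμ3]
  -- p₁ > 1/2
  have hinv : 1/μ < 1/3 := by
    apply one_div_lt_one_div_of_lt (by norm_num) hμ3
  have hph : (1:ℝ)/2 < p₁ := by rw [hp₁]; linarith
  have hqh : (1:ℝ)/2 < q₂ := lt_of_lt_of_le hph hq₂.1.le
  -- fixed point identity
  have hfix : μ * p₁ * (1 - p₁) = p₁ := by
    rw [hp₁]; field_simp; ring
  have hqr : μ * q₂ * (1 - q₂) = 1 - p₁ := hq₂root
  -- derivative
  have hd : deriv (logistic μ) p₁ = 2 - μ := by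
    have h1 : HasDerivAt (fun x : ℝ => μ * x) μ p₁ := by
      simpa using (hasDerivAt_id p₁).const_mul μ
    have h2 : HasDerivAt (fun x : ℝ => 1 - x) (-1) p₁ := by
      simpa using (hasDerivAt_id p₁).const_sub 1
    have h : HasDerivAt (logistic μ) (μ * (1 - p₁) + μ * p₁ * (-1)) p₁ := by
      exact (h1.mul h2).congr_deriv (by ring)
    rw [h.deriv, hp₁]; field_simp; ring
  -- μ ≤ 4 q₂
  have hq4 : μ ≤ 4 * q₂ := by
    have hqq : μ * (μ * q₂ * (1 - q₂)) = 1 := by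
      rw [hqr, hp₁]; field_simp; ring
    have key : μ^2 * (2*q₂ - 1)^2 = μ^2 - 4 := by nlinarith [hqq]
    have hpoly : μ^4 - 4*μ^3 + 16 ≤ 0 := by
      nlinarith [hs, hμ3, mul_nonneg (by nlinarith : (0:ℝ) ≤ 6 - (μ-1)^2)
        (by nlinarith : (0:ℝ) ≤ 4 + (μ-1)^2), sq_nonneg (μ - 3)]
    -- μ^2 (μ/2 - 1)^2 ≤ μ^2 - 4
    have h2q : 0 < 2*q₂ - 1 := by linarith
    nlinarith [key, hpoly, h2q, hμ3, mul_pos hμ0 hμ0,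
      mul_pos (mul_pos hμ0 hμ0) h2q, sq_nonneg (2*q₂ - 1 + (μ/2 - 1))]
  refine ⟨⟨?_, by rw [hd]; linarith⟩, ?_, ?_⟩
  · rw [hd, abs_of_neg (by linarith : (2:ℝ) - μ < 0)]; linarith
  · rintro x ⟨hx1, hx2⟩
    simp only [logistic, Set.mem_Icc]
    constructor
    · have idp : μ*x*(1-x) - p₁ = μ*(p₁-x)*(x-1+p₁) := by linear_combination hfix
      linarith [mul_nonneg (mul_nonneg hμ0.le (by linarith : 0 ≤ p₁ - x))
        (by linarith : 0 ≤ x - 1 + p₁)]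
    · nlinarith [sq_nonneg (2*x - 1), hq4, hμ0]
  · rintro x ⟨hx1, hx2⟩
    simp only [logistic, Set.mem_Icc]
    constructor
    · have idq : μ*x*(1-x) - (1-p₁) = μ*(q₂-x)*(x-1+q₂) := by linear_combination hqr
      linarith [mul_nonneg (mul_nonneg hμ0.le (by linarith : 0 ≤ q₂ - x))
        (by linarith : 0 ≤ x - 1 + q₂)]
    · have idp : μ*x*(1-x) - p₁ = -(μ*(x-p₁)*(x-1+p₁)) := by linear_combination hfix
      linarith [mul_nonneg (mul_nonneg hμ0.le (by linarith : 0 ≤ x - p₁))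
        (by linarith : 0 ≤ x - 1 + p₁)]
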